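/- Let G be a finite group of order invertible in a commutative ring R, and M an R[G]-module. Then M is a projective R[G]-module if and only if M is projective as an R-module. -/

import Mathlib

open TensorProduct MonoidAlgebra

/-- Maschke-type criterion: let `G` be a finite group whose order is invertible
in a commutative ring `R`, and `M` an `R[G]`-module.  Then `M` is projective over `R[G]` if
and only if `M` is projective over `R`. -/
theorem stmt_3 (R : Type*) [CommRing R] (G : Type*) [Group G] [Fintype G]
    (h : IsUnit (Fintype.card G : R))
    (M : Type*) [AddCommGroup M] [Module (MonoidAlgebra R G) M]
    [Module R M] [IsScalarTower R (MonoidAlgebra R G) M] :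
    Module.Projective (MonoidAlgebra R G) M ↔ Module.Projective R M := by
  constructor
  · intro hP
    obtain ⟨f, hf⟩ := hP
    haveI : Module.Free R (MonoidAlgebra R G) := inferInstance
    haveI : Module.Free R (M →₀ MonoidAlgebra R G) := Module.Free.finsupp _ _ _
    exact Module.Projective.of_split (f.restrictScalars R)
      ((Finsupp.linearCombination (MonoidAlgebra R G) id).restrictScalars R)
      (LinearMap.ext fun m => hf m)
  · intro hP
    -- the multiplication map `p : R[G] ⊗[R] M → M`
    let p : (MonoidAlgebra R G) ⊗[R] M →ₗ[MonoidAlgebra R G] M :=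
      TensorProduct.AlgebraTensorModule.lift
        { toFun := fun a => a • (LinearMap.id (R := R) (M := M))
          map_add' := fun a b => by ext m; simp [add_smul]
          map_smul' := fun a b => by ext m; simp [mul_smul] }
    have hp : ∀ (a : MonoidAlgebra R G) (m : M), p (a ⊗ₜ m) = a • m := fun a m => rfl
    -- the `R`-linear section `m ↦ 1 ⊗ m`
    let s₀ : M →ₗ[R] (MonoidAlgebra R G) ⊗[R] M :=
      { toFun := fun m => 1 ⊗ₜ m
        map_add' := fun m n => by simp [tmul_add]
        map_smul' := fun r m => by simp [tmul_smul] }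
    -- conjugates of `s₀`
    let conj : G → (M →ₗ[R] (MonoidAlgebra R G) ⊗[R] M) := fun g =>
      GroupSMul.linearMap R ((MonoidAlgebra R G) ⊗[R] M) g⁻¹ ∘ₗ s₀ ∘ₗ GroupSMul.linearMap R M g
    have conj_apply : ∀ (g : G) (m : M),
        conj g m = single g⁻¹ (1 : R) • s₀ (single g (1 : R) • m) := fun g m => rfl
    -- the averaged section is `R[G]`-linear
    let T : M →ₗ[MonoidAlgebra R G] (MonoidAlgebra R G) ⊗[R] M :=
      MonoidAlgebra.equivariantOfLinearOfComm (∑ g : G, conj g) fun g v => by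
        simp only [LinearMap.sum_apply, Finset.smul_sum, conj_apply]
        refine Fintype.sum_bijective (· * g) (Group.mulRight_bijective g) _ _ fun i ↦ ?_
        simp only [smul_smul, single_mul_single, mul_inv_rev, mul_inv_cancel_left, one_mul]
    have hT : ∀ m : M, T m = ∑ g : G, conj g m := fun m => LinearMap.sum_apply _ _ _
    let s : M →ₗ[MonoidAlgebra R G] (MonoidAlgebra R G) ⊗[R] M :=
      Ring.inverse (Fintype.card G : R) • T
    have key : ∀ m : M, p (s m) = m := by
      intro m
      have hs : s m = Ring.inverse (Fintype.card G : R) • T m := rfl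
      rw [hs, LinearMap.map_smul_of_tower, hT, map_sum]
      have : ∀ g : G, p (conj g m) = m := by
        intro g
        have e1 : conj g m = (single g⁻¹ (1 : R)) ⊗ₜ[R] (single g (1 : R) • m) := by
          rw [conj_apply]
          show single g⁻¹ (1 : R) • ((1 : MonoidAlgebra R G) ⊗ₜ[R] (single g (1 : R) • m)) = _
          rw [smul_tmul', smul_eq_mul, mul_one]
        rw [e1, hp, smul_smul, single_mul_single, one_mul,
          inv_mul_cancel, ← MonoidAlgebra.one_def, one_smul]
      simp only [this, Finset.sum_const, Finset.card_univ, ← Nat.cast_smul_eq_nsmul R, smul_smul,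
        Ring.inverse_mul_cancel _ h, one_smul]
    exact Module.Projective.of_split s p (LinearMap.ext fun m => key m)
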